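/- arXiv:1910.14367 — 8 statements merged into one kernel-verified Lean document; each statement's English description precedes it below -/
import Mathlib

section
/- For k ∈ (0,1) and q, s ∈ [0,1] with q > s, the belief update function Φ(b) = ((q·b + s·(1-b))·(1-k)) / ((q·b + s·(1-b))·(1-k) + (1-q)·b + (1-s)·(1-b)) is strictly increasing in b on [0,1]. -/
/-- The failed-ACK belief update
`Φ(b) = ((q·b + s·(1-b))·(1-k)) / ((q·b + s·(1-b))·(1-k) + (1-q)·b + (1-s)·(1-b))`
is strictly increasing in `b` on `[0,1]`, for `k ∈ (0,1)`, `0 ≤ s < q ≤ 1`,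
assuming the denominator is positive on `[0,1]`. -/
theorem phi_strictMonoOn
    (q s k : ℝ) (hk0 : 0 < k) (hk1 : k < 1) (hs : 0 ≤ s) (hsq : s < q) (hq : q ≤ 1)
    (hden : ∀ b ∈ Set.Icc (0:ℝ) 1,
      0 < (q*b + s*(1-b))*(1-k) + (1-q)*b + (1-s)*(1-b)) :
    StrictMonoOn
      (fun b : ℝ =>
        ((q*b + s*(1-b))*(1-k)) /
          ((q*b + s*(1-b))*(1-k) + (1-q)*b + (1-s)*(1-b)))
      (Set.Icc (0:ℝ) 1) := by
  intro x hx y hy hxy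
  have hdx := hden x hx
  have hdy := hden y hy
  simp only
  rw [div_lt_div_iff₀ hdx hdy]
  nlinarith [mul_pos (sub_pos.mpr hsq) (sub_pos.mpr hxy),
    mul_pos (mul_pos (sub_pos.mpr hsq) (sub_pos.mpr hxy)) (sub_pos.mpr hk1),
    mul_pos (mul_pos (mul_pos (sub_pos.mpr hsq) (sub_pos.mpr hxy)) (sub_pos.mpr hk1)) hk0]
end

section
/- If q > s and 0 < k < 1, then setting b₀ = 1 and b_{m+1} = Φ(b_m) where Φ is the failed-ACK belief update, the sequence (b_m) is strictly decreasing. In particular b₁ = (q - q·k)/(1 - q·k) < 1. -/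
section Aux

variable (q s k : ℝ)

private noncomputable def Phi (z : ℝ) : ℝ :=
  ((q * z + s*(1 - z))*(1-k)) / ((q * z + s*(1 - z))*(1-k) + (1-q)*z + (1-s)*(1 - z))

private lemma den_pos (hq0 : 0 < q) (hq1 : q < 1) (hs : 0 ≤ s) (hsq : s < q)
    (hk1 : k < 1) {z : ℝ} (hz0 : 0 ≤ z) (hz1 : z ≤ 1) :
    0 < (q * z + s*(1 - z))*(1-k) + (1-q)*z + (1-s)*(1 - z) := by
  nlinarith [mul_nonneg hs (sub_nonneg.2 hz1), mul_nonneg hq0.le hz0,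
    mul_nonneg (mul_nonneg hs (sub_nonneg.2 hz1)) (sub_pos.2 hk1).le,
    mul_nonneg (mul_nonneg hq0.le hz0) (sub_pos.2 hk1).le]

private lemma phi_nonneg (hq0 : 0 < q) (hq1 : q < 1) (hs : 0 ≤ s) (hsq : s < q)
    (hk1 : k < 1) {z : ℝ} (hz0 : 0 ≤ z) (hz1 : z ≤ 1) :
    0 ≤ Phi q s k z := by
  apply div_nonneg _ (den_pos q s k hq0 hq1 hs hsq hk1 hz0 hz1).le
  have : 0 ≤ q * z + s * (1 - z) := by
    nlinarith [mul_nonneg hs (sub_nonneg.2 hz1), mul_nonneg hq0.le hz0]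
  nlinarith

private lemma phi_mono (hq0 : 0 < q) (hq1 : q < 1) (hs : 0 ≤ s) (hsq : s < q)
    (hk1 : k < 1) {x y : ℝ} (hx0 : 0 ≤ x) (hxy : x < y) (hy1 : y ≤ 1) :
    Phi q s k x < Phi q s k y := by
  have hx1 : x ≤ 1 := le_trans hxy.le hy1
  have hy0 : 0 ≤ y := le_trans hx0 hxy.le
  have hdx := den_pos q s k hq0 hq1 hs hsq hk1 hx0 hx1
  have hdy := den_pos q s k hq0 hq1 hs hsq hk1 hy0 hy1
  rw [Phi, Phi, div_lt_div_iff₀ hdx hdy]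
  have hk1' : 0 < 1 - k := by linarith
  have hy0' : 0 < y := lt_of_le_of_lt hx0 hxy
  have hNy : 0 < (q * y + s*(1 - y))*(1-k) := by
    have := mul_pos hq0 hy0'
    nlinarith [mul_nonneg hs (sub_nonneg.2 hy1)]
  have hd : 0 < (q-s)*(y-x) := mul_pos (sub_pos.2 hsq) (sub_pos.2 hxy)
  have hPy : 0 < (1-q)*y + (1-s)*(1-y) := by nlinarith
  nlinarith [mul_pos hNy hd, mul_pos hPy (mul_pos hk1' hd)]

end Aux

/-- Starting from belief `b₀ = 1` and iterating the failed-ACK belief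
update `Φ`, the belief sequence is strictly decreasing; in particular
`b₁ = (q - q·k)/(1 - q·k) < 1`. Here `0 ≤ s < q < 1` and `k ∈ (0,1)`. -/
theorem belief_strictAnti_under_ack_failures
    (q s k : ℝ) (hq0 : 0 < q) (hq1 : q < 1) (hs : 0 ≤ s) (hsq : s < q)
    (hk0 : 0 < k) (hk1 : k < 1)
    (b : ℕ → ℝ) (hb0 : b 0 = 1)
    (hbrec : ∀ m, b (m+1) =
      ((q * b m + s*(1 - b m))*(1-k)) /
        ((q * b m + s*(1 - b m))*(1-k) + (1-q)*(b m) + (1-s)*(1 - b m))) :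
    StrictAnti b ∧ b 1 = (q - q*k)/(1 - q*k) ∧ b 1 < 1 := by
  have hphi : ∀ m, b (m+1) = Phi q s k (b m) := fun m => hbrec m
  have hqk : 0 < 1 - q*k := by nlinarith
  have hb1 : b 1 = (q - q*k)/(1 - q*k) := by
    rw [hphi 0, hb0, Phi]
    ring_nf
  have hb1lt : b 1 < 1 := by
    rw [hb1, div_lt_one hqk]; nlinarith
  have hb1nn : 0 ≤ b 1 := by
    rw [hphi 0, hb0]
    exact phi_nonneg q s k hq0 hq1 hs hsq hk1 (by norm_num) le_rfl
  -- invariant: 0 ≤ b (m+1) ∧ b (m+1) < b m ∧ b m ≤ 1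
  have key : ∀ m, 0 ≤ b (m+1) ∧ b (m+1) < b m ∧ b m ≤ 1 := by
    intro m
    induction m with
    | zero => exact ⟨hb1nn, by rw [hb0]; exact hb1lt, le_of_eq hb0⟩
    | succ n ih =>
      obtain ⟨h0, hlt, h1⟩ := ih
      have hlt' : b (n+2) < b (n+1) := by
        rw [hphi (n+1)]
        conv_rhs => rw [hphi n]
        exact phi_mono q s k hq0 hq1 hs hsq hk1 h0 hlt h1
      have h0' : 0 ≤ b (n+2) := by
        rw [hphi (n+1)]
        exact phi_nonneg q s k hq0 hq1 hs hsq hk1 h0 (le_trans hlt.le h1)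
      exact ⟨h0', hlt', le_trans hlt.le h1⟩
  exact ⟨strictAnti_nat_of_succ_lt (fun n => (key n).2.1), hb1, hb1lt⟩
end

section
/- If J_{l+1}(b) = min_{i=1..n}(η_i + β_i·b) is a finite minimum of affine functions, then the composed map b ↦ (1 - (q·b + s·(1-b))·k) · J_{l+1}(Φ(b)), where Φ(b) = ((q·b + s·(1-b))·(1-k)) / (1 - (q·b + s·(1-b))·k), equals min_{i=1..n} [ η_i·(1 - (q·b + s·(1-b))·k) + β_i·(q·b + s·(1-b))·(1-k) ], and is therefore a finite minimum of affine functions of b, hence concave on [0,1]. -/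
/-- If `J_{l+1}(b) = min_i (η i + β i · b)` is a finite minimum of affine
functions, then `b ↦ (1 - (q·b+s·(1-b))·k) · J_{l+1}(Φ(b))`, with
`Φ(b) = ((q·b+s·(1-b))·(1-k)) / (1 - (q·b+s·(1-b))·k)`, equals
`min_i [η i·(1 - (q·b+s·(1-b))·k) + β i·(q·b+s·(1-b))·(1-k)]` on `[0,1]`,
and hence is concave on `[0,1]`. -/
theorem weighted_value_after_update_is_min_of_affine
    (n : ℕ) (hn : 0 < n) (η β : Fin n → ℝ)
    (q s k : ℝ) (hq : q ∈ Set.Icc (0:ℝ) 1) (hs : s ∈ Set.Icc (0:ℝ) 1)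
    (hk : k ∈ Set.Icc (0:ℝ) 1)
    (hden : ∀ b ∈ Set.Icc (0:ℝ) 1, 0 < 1 - (q*b + s*(1-b))*k) :
    (∀ b ∈ Set.Icc (0:ℝ) 1,
      (1 - (q*b + s*(1-b))*k) *
        (⨅ i : Fin n, (η i + β i * (((q*b + s*(1-b))*(1-k)) / (1 - (q*b + s*(1-b))*k))))
      = ⨅ i : Fin n, (η i * (1 - (q*b + s*(1-b))*k) + β i * ((q*b + s*(1-b))*(1-k)))) ∧
    ConcaveOn ℝ (Set.Icc (0:ℝ) 1)
      (fun b : ℝ => (1 - (q*b + s*(1-b))*k) *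
        (⨅ i : Fin n, (η i + β i * (((q*b + s*(1-b))*(1-k)) / (1 - (q*b + s*(1-b))*k))))) := by
  haveI : Nonempty (Fin n) := ⟨⟨0, hn⟩⟩
  have key : ∀ b ∈ Set.Icc (0:ℝ) 1,
      (1 - (q*b + s*(1-b))*k) *
        (⨅ i : Fin n, (η i + β i * (((q*b + s*(1-b))*(1-k)) / (1 - (q*b + s*(1-b))*k))))
      = ⨅ i : Fin n, (η i * (1 - (q*b + s*(1-b))*k) + β i * ((q*b + s*(1-b))*(1-k))) := by
    intro b hb
    have hc : 0 < 1 - (q*b + s*(1-b))*k := hden b hb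
    rw [Real.mul_iInf_of_nonneg hc.le]
    congr 1
    funext i
    field_simp
  refine ⟨key, ?_⟩
  -- define the affine functions
  set g : Fin n → ℝ → ℝ := fun i b =>
    η i * (1 - (q*b + s*(1-b))*k) + β i * ((q*b + s*(1-b))*(1-k)) with hg
  have hbdd : ∀ b : ℝ, BddBelow (Set.range fun i => g i b) := fun b =>
    Set.Finite.bddBelow (Set.finite_range _)
  constructor
  · exact convex_Icc 0 1
  · intro x hx y hy a c ha hc hac
    simp only [smul_eq_mul]
    have hxy : a * x + c * y ∈ Set.Icc (0:ℝ) 1 :=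
      (convex_Icc (0:ℝ) 1) hx hy ha hc hac
    rw [key x hx, key y hy, key _ hxy]
    refine le_ciInf fun i => ?_
    have h1 : (⨅ j, g j x) ≤ g i x := ciInf_le (hbdd x) i
    have h2 : (⨅ j, g j y) ≤ g i y := ciInf_le (hbdd y) i
    have haff : g i (a * x + c * y) = a * g i x + c * g i y := by
      simp only [hg]
      have : a = 1 - c := by linarith
      subst this
      ring
    calc a * (⨅ j, g j x) + c * (⨅ j, g j y)
        ≤ a * g i x + c * g i y :=
          add_le_add (mul_le_mul_of_nonneg_left h1 ha)
            (mul_le_mul_of_nonneg_left h2 hc)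
      _ = g i (a * x + c * y) := haff.symm
end

section
/- Define the terminal cost J_{N-1}(b) = (1 - k·b)·C and recursively J_l(b) = min{ C , (1 - k·b)·C + (q·b + s·(1-b))·k·J_{l+1}(1) + (1 - (q·b + s·(1-b))·k)·J_{l+1}(Φ(b)) } where Φ(b) = ((q·b + s·(1-b))·(1-k))/(1 - (q·b + s·(1-b))·k). Then for every l < N-1, J_l is concave and piecewise linear (a finite minimum of affine functions) on [0,1]. -/
lemma iInf_fin_exists_min {n : ℕ} (hn : 0 < n) (f : Fin n → ℝ) :
    ∃ i0, (∀ i, f i0 ≤ f i) ∧ (⨅ i, f i) = f i0 := by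
  haveI : Nonempty (Fin n) := Fin.pos_iff_nonempty.mp hn
  obtain ⟨i0, hi0⟩ := Finite.exists_min f
  exact ⟨i0, hi0, le_antisymm (ciInf_le (Set.finite_range f).bddBelow i0) (le_ciInf hi0)⟩

lemma concave_of_inf_affine {n : ℕ} (hn : 0 < n) (η β : Fin n → ℝ) (f : ℝ → ℝ)
    (hf : ∀ b ∈ Set.Icc (0:ℝ) 1, f b = ⨅ i : Fin n, (η i + β i * b)) :
    ConcaveOn ℝ (Set.Icc (0:ℝ) 1) f := by
  haveI : Nonempty (Fin n) := Fin.pos_iff_nonempty.mp hn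
  refine ⟨convex_Icc 0 1, ?_⟩
  intro x hx y hy a c ha hc hac
  have hxy : a • x + c • y ∈ Set.Icc (0:ℝ) 1 := (convex_Icc 0 1) hx hy ha hc hac
  rw [hf _ hxy]
  apply le_ciInf
  intro i
  have h1 : f x ≤ η i + β i * x := by
    rw [hf x hx]; exact ciInf_le (Set.finite_range _).bddBelow i
  have h2 : f y ≤ η i + β i * y := by
    rw [hf y hy]; exact ciInf_le (Set.finite_range _).bddBelow i
  have e1 := mul_le_mul_of_nonneg_left h1 ha
  have e2 := mul_le_mul_of_nonneg_left h2 hc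
  simp only [smul_eq_mul]
  have heq : a * (η i + β i * x) + c * (η i + β i * y) = η i + β i * (a*x + c*y) := by
    linear_combination (η i) * hac
  linarith [e1, e2]

/-- For the finite-horizon DP (indexed by time-to-go `m`, so `J 0` is the
terminal value `J_{N-1}` and `J (m+1)` corresponds to `J_l` with `l = N-1-(m+1) < N-1`):
`J 0 b = (1-k·b)·C` and
`J (m+1) b = min {C, (1-k·b)·C + (q·b+s·(1-b))·k·(J m 1) + (1-(q·b+s·(1-b))·k)·(J m (Φ b))}`,
every non-terminal value function `J (m+1)` is concave and is a finite minimum of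
affine functions (piecewise linear) on `[0,1]`. -/
theorem value_functions_concave_piecewise_linear
    (C q s k : ℝ) (hC : 0 < C) (hs0 : 0 ≤ s) (hsq : s < q) (hq1 : q ≤ 1)
    (hk0 : 0 < k) (hk1 : k < 1)
    (hden : ∀ b ∈ Set.Icc (0:ℝ) 1, 0 < 1 - (q*b + s*(1-b))*k)
    (J : ℕ → ℝ → ℝ)
    (hJ0 : ∀ b : ℝ, J 0 b = (1 - k*b)*C)
    (hJrec : ∀ m : ℕ, ∀ b : ℝ, J (m+1) b =
      min C ((1 - k*b)*C + (q*b + s*(1-b))*k * J m 1 +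
        (1 - (q*b + s*(1-b))*k) *
          J m (((q*b + s*(1-b))*(1-k)) / (1 - (q*b + s*(1-b))*k)))) :
    ∀ m : ℕ,
      ConcaveOn ℝ (Set.Icc (0:ℝ) 1) (J (m+1)) ∧
      ∃ n : ℕ, 0 < n ∧ ∃ η β : Fin n → ℝ,
        ∀ b ∈ Set.Icc (0:ℝ) 1, J (m+1) b = ⨅ i : Fin n, (η i + β i * b) := by
  have key : ∀ m : ℕ, ∃ n : ℕ, 0 < n ∧ ∃ η β : Fin n → ℝ,
      ∀ b ∈ Set.Icc (0:ℝ) 1, J m b = ⨅ i : Fin n, (η i + β i * b) := by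
    intro m
    induction m with
    | zero =>
      refine ⟨1, one_pos, fun _ => C, fun _ => -(k*C), fun b _ => ?_⟩
      rw [hJ0, ciInf_unique]
      ring
    | succ m ih =>
      obtain ⟨n, hn, η, β, hrep⟩ := ih
      set Jm1 := J m 1 with hJm1
      refine ⟨n+1, Nat.succ_pos n,
        Fin.cases C (fun i => C + s*k*Jm1 + η i * (1 - s*k) + β i * (s * (1-k))),
        Fin.cases 0 (fun i => -(k*C) + (q-s)*k*Jm1 - η i * ((q-s)*k) + β i * ((q-s)*(1-k))),
        ?_⟩
      intro b hb
      obtain ⟨hb0, hb1⟩ := hb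
      rw [hJrec m b]
      set p := q*b + s*(1-b) with hp
      have hd : 0 < 1 - p*k := hden b ⟨hb0, hb1⟩
      have hsq' : 0 ≤ q := le_trans hs0 hsq.le
      have hp0 : 0 ≤ p := by
        have := mul_nonneg hsq' hb0
        have := mul_nonneg hs0 (by linarith : (0:ℝ) ≤ 1 - b)
        rw [hp]; linarith
      have hp1 : p ≤ 1 := by
        have h1 : q*b ≤ 1*b := mul_le_mul_of_nonneg_right hq1 hb0
        have h2 : s*(1-b) ≤ 1*(1-b) :=
          mul_le_mul_of_nonneg_right (by linarith) (by linarith)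
        rw [hp]; linarith
      set Φ := p*(1-k) / (1 - p*k) with hΦdef
      have hΦmem : Φ ∈ Set.Icc (0:ℝ) 1 := by
        constructor
        · exact div_nonneg (mul_nonneg hp0 (by linarith)) hd.le
        · rw [hΦdef, div_le_one hd]
          nlinarith
      have hcancel : (1 - p*k) * Φ = p*(1-k) := by
        rw [hΦdef, mul_div_cancel₀ _ hd.ne']
      rw [hrep Φ hΦmem]
      obtain ⟨i0, hmin, hval⟩ := iInf_fin_exists_min hn (fun i => η i + β i * Φ)
      rw [hval]
      have hF : ∀ i : Fin n,
          (Fin.cases C (fun i => C + s*k*Jm1 + η i * (1 - s*k) + β i * (s * (1-k))) i.succ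
            : ℝ) +
          (Fin.cases 0 (fun i => -(k*C) + (q-s)*k*Jm1 - η i * ((q-s)*k) + β i * ((q-s)*(1-k)))
            i.succ : ℝ) * b
          = (1 - k*b)*C + p*k*Jm1 + (1 - p*k)*(η i + β i * Φ) := by
        intro i
        simp only [Fin.cases_succ]
        have : (1 - p*k)*(η i + β i * Φ) = η i * (1 - p*k) + β i * (p*(1-k)) := by
          rw [mul_add, ← mul_assoc, mul_comm (1 - p*k) (β i), mul_assoc, hcancel]
          ring
        rw [this, hp]
        ring
      have h0 : (Fin.cases C (fun i => C + s*k*Jm1 + η i * (1 - s*k) + β i * (s * (1-k)))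
            (0 : Fin (n+1)) : ℝ) +
          (Fin.cases 0 (fun i => -(k*C) + (q-s)*k*Jm1 - η i * ((q-s)*k) + β i * ((q-s)*(1-k)))
            (0 : Fin (n+1)) : ℝ) * b = C := by
        simp
      have hbdd : BddBelow (Set.range (fun j : Fin (n+1) =>
          (Fin.cases C (fun i => C + s*k*Jm1 + η i * (1 - s*k) + β i * (s * (1-k))) j : ℝ) +
          (Fin.cases 0 (fun i => -(k*C) + (q-s)*k*Jm1 - η i * ((q-s)*k) + β i * ((q-s)*(1-k)))
            j : ℝ) * b)) := (Set.finite_range _).bddBelow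
      apply le_antisymm
      · apply le_ciInf
        intro j
        induction j using Fin.cases with
        | zero => rw [h0]; exact min_le_left _ _
        | succ i =>
          rw [hF i]
          refine le_trans (min_le_right _ _) ?_
          have := hmin i
          have h2 := mul_le_mul_of_nonneg_left this hd.le
          linarith
      · apply le_min
        · have := ciInf_le hbdd (0 : Fin (n+1))
          rwa [h0] at this
        · have := ciInf_le hbdd i0.succ
          rwa [hF i0] at this
  intro m
  obtain ⟨n, hn, η, β, hrep⟩ := key (m+1)
  exact ⟨concave_of_inf_affine hn η β (J (m+1)) hrep, n, hn, η, β, hrep⟩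
end

section
/- For the finite-horizon dynamic program J_{N-1}(b) = (1 - k·b)·C, J_l(b) = min{C, A_l(b)} with A_l(b) = (1 - k·b)·C + (q·b + s·(1-b))·k·J_{l+1}(1) + (1 - (q·b + s·(1-b))·k)·J_{l+1}(Φ(b)), the value functions are monotone in time: J_l(b) ≥ J_{l+1}(b) for all b ∈ [0,1] and all l ≤ N-2. -/
/-- Monotonicity in time of the value functions. With time-to-go
indexing (`J 0` = terminal `J_{N-1}`), the claim `J_l(b) ≥ J_{l+1}(b)` for all
`l ≤ N-2` reads: `J (m+1) b ≥ J m b` for all `m` and all `b ∈ [0,1]`. -/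
theorem value_functions_monotone_in_time
    (C q s k : ℝ) (hC : 0 < C) (hs0 : 0 ≤ s) (hsq : s < q) (hq1 : q ≤ 1)
    (hk0 : 0 < k) (hk1 : k < 1)
    (hden : ∀ b ∈ Set.Icc (0:ℝ) 1, 0 < 1 - (q*b + s*(1-b))*k)
    (J : ℕ → ℝ → ℝ) (A : ℕ → ℝ → ℝ)
    (hJ0 : ∀ b : ℝ, J 0 b = (1 - k*b)*C)
    (hA : ∀ m : ℕ, ∀ b : ℝ, A m b =
      (1 - k*b)*C + (q*b + s*(1-b))*k * J m 1 +
        (1 - (q*b + s*(1-b))*k) *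
          J m (((q*b + s*(1-b))*(1-k)) / (1 - (q*b + s*(1-b))*k)))
    (hJrec : ∀ m : ℕ, ∀ b : ℝ, J (m+1) b = min C (A m b)) :
    ∀ m : ℕ, ∀ b ∈ Set.Icc (0:ℝ) 1, J m b ≤ J (m+1) b := by
  have hq0 : 0 ≤ q := hs0.trans hsq.le
  have hp : ∀ b ∈ Set.Icc (0:ℝ) 1, q*b + s*(1-b) ∈ Set.Icc (0:ℝ) 1 := by
    intro b hb
    obtain ⟨hb0, hb1⟩ := hb
    constructor
    · nlinarith
    · nlinarith
  have hPhi : ∀ b ∈ Set.Icc (0:ℝ) 1,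
      ((q*b + s*(1-b))*(1-k)) / (1 - (q*b + s*(1-b))*k) ∈ Set.Icc (0:ℝ) 1 := by
    intro b hb
    have hd := hden b hb
    obtain ⟨h0, h1⟩ := hp b hb
    constructor
    · apply div_nonneg
      · nlinarith
      · linarith
    · rw [div_le_one hd]; nlinarith
  intro m
  induction m with
  | zero =>
    intro b hb
    have hd := hden b hb
    obtain ⟨hp0, hp1⟩ := hp b hb
    obtain ⟨hx0, hx1⟩ := hPhi b hb
    obtain ⟨hb0, hb1⟩ := hb
    rw [hJrec, hA, hJ0 b, hJ0 1,
      hJ0 (((q*b + s*(1-b))*(1-k)) / (1 - (q*b + s*(1-b))*k))]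
    set x := ((q*b + s*(1-b))*(1-k)) / (1 - (q*b + s*(1-b))*k)
    apply le_min
    · nlinarith [mul_nonneg (mul_nonneg hk0.le hb0) hC.le]
    · nlinarith [mul_nonneg (mul_nonneg (mul_nonneg hp0 hk0.le)
        (by nlinarith : (0:ℝ) ≤ 1 - k*1)) hC.le,
        mul_nonneg (mul_nonneg hd.le (by nlinarith : (0:ℝ) ≤ 1 - k*x)) hC.le]
  | succ n ih =>
    intro b hb
    have hd := hden b hb
    obtain ⟨hp0, hp1⟩ := hp b hb
    have h1 := ih 1 ⟨zero_le_one, le_rfl⟩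
    have h2 := ih _ (hPhi b hb)
    rw [hJrec n b, hJrec (n+1) b]
    apply min_le_min le_rfl
    rw [hA n b, hA (n+1) b]
    have c1 : 0 ≤ (q*b + s*(1-b))*k := mul_nonneg hp0 hk0.le
    nlinarith [mul_le_mul_of_nonneg_left h1 c1, mul_le_mul_of_nonneg_left h2 hd.le]
end

section
/- With A_l defined by A_l(b) = (1 - k·b)·C + (q·b + s·(1-b))·k·J_{l+1}(1) + (1 - (q·b + s·(1-b))·k)·J_{l+1}(Φ(b)) and J_l(b) = min{C, A_l(b)}, the continuation-cost functions are monotone in time: A_l(b) ≥ A_{l+1}(b) for all b ∈ [0,1] and all valid l. -/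
/-- Monotonicity in time of the continuation costs. With time-to-go
indexing (`J 0` = terminal `J_{N-1}`, and `A m` the continuation cost built from
continuation value `J m`), the claim `A_l(b) ≥ A_{l+1}(b)` reads:
`A (m+1) b ≥ A m b` for all `m` and `b ∈ [0,1]`. -/
theorem continuation_costs_monotone_in_time
    (C q s k : ℝ) (hC : 0 < C) (hs0 : 0 ≤ s) (hsq : s < q) (hq1 : q ≤ 1)
    (hk0 : 0 < k) (hk1 : k < 1)
    (hden : ∀ b ∈ Set.Icc (0:ℝ) 1, 0 < 1 - (q*b + s*(1-b))*k)
    (J : ℕ → ℝ → ℝ) (A : ℕ → ℝ → ℝ)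
    (hJ0 : ∀ b : ℝ, J 0 b = (1 - k*b)*C)
    (hA : ∀ m : ℕ, ∀ b : ℝ, A m b =
      (1 - k*b)*C + (q*b + s*(1-b))*k * J m 1 +
        (1 - (q*b + s*(1-b))*k) *
          J m (((q*b + s*(1-b))*(1-k)) / (1 - (q*b + s*(1-b))*k)))
    (hJrec : ∀ m : ℕ, ∀ b : ℝ, J (m+1) b = min C (A m b)) :
    ∀ m : ℕ, ∀ b ∈ Set.Icc (0:ℝ) 1, A m b ≤ A (m+1) b := by
  have hp : ∀ b ∈ Set.Icc (0:ℝ) 1, 0 ≤ q*b + s*(1-b) ∧ q*b + s*(1-b) ≤ 1 := by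
    intro b hb
    obtain ⟨hb0, hb1⟩ := hb
    constructor
    · nlinarith
    · nlinarith
  have hΦ : ∀ b ∈ Set.Icc (0:ℝ) 1,
      ((q*b + s*(1-b))*(1-k)) / (1 - (q*b + s*(1-b))*k) ∈ Set.Icc (0:ℝ) 1 := by
    intro b hb
    have hd := hden b hb
    have hp' := hp b hb
    constructor
    · exact div_nonneg (mul_nonneg hp'.1 (by linarith)) hd.le
    · rw [div_le_one hd]
      nlinarith [hp'.2]
  have hAstep : ∀ m : ℕ, (∀ x ∈ Set.Icc (0:ℝ) 1, J m x ≤ J (m+1) x) →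
      ∀ b ∈ Set.Icc (0:ℝ) 1, A m b ≤ A (m+1) b := by
    intro m hJm b hb
    rw [hA m b, hA (m+1) b]
    have h1 := hJm 1 (by norm_num)
    have h2 := hJm _ (hΦ b hb)
    have hpk : 0 ≤ (q*b + s*(1-b))*k := mul_nonneg (hp b hb).1 hk0.le
    have hd := (hden b hb).le
    nlinarith [mul_le_mul_of_nonneg_left h1 hpk, mul_le_mul_of_nonneg_left h2 hd]
  have hJmono : ∀ m : ℕ, ∀ x ∈ Set.Icc (0:ℝ) 1, J m x ≤ J (m+1) x := by
    intro m
    induction m with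
    | zero =>
      intro x hx
      have e1 : J 1 x = min C (A 0 x) := hJrec 0 x
      rw [hJ0, e1]
      have hJ0nn : ∀ y ∈ Set.Icc (0:ℝ) 1, 0 ≤ J 0 y := by
        intro y hy
        rw [hJ0]
        have hky : k*y ≤ k := mul_le_of_le_one_right hk0.le hy.2
        nlinarith
      have h1 := hJ0nn 1 (by norm_num)
      have h2 := hJ0nn _ (hΦ x hx)
      have hpk : 0 ≤ (q*x + s*(1-x))*k := mul_nonneg (hp x hx).1 hk0.le
      have hd := (hden x hx).le
      refine le_min ?_ ?_
      · have := mul_nonneg hk0.le hx.1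
        nlinarith
      · rw [hA, hJ0]
        nlinarith [mul_nonneg hd h2,
          mul_nonneg hpk (mul_nonneg (by linarith : (0:ℝ) ≤ 1 - k*1) hC.le)]
    | succ n ih =>
      intro x hx
      have e1 : J (n+1) x = min C (A n x) := hJrec n x
      have e2 : J (n+2) x = min C (A (n+1) x) := hJrec (n+1) x
      rw [e1, e2]
      exact min_le_min le_rfl (hAstep n ih x hx)
  exact fun m => hAstep m (hJmono m)
end

section
/- Each continuation-cost function A_l is nonincreasing in the belief: for all 0 ≤ b < b' ≤ 1, A_l(b) ≥ A_l(b'). -/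
/-- Each continuation-cost function `A_l` is nonincreasing in the belief:
for all `0 ≤ b < b' ≤ 1`, `A_l(b) ≥ A_l(b')` (time-to-go indexing). -/
theorem continuation_cost_antitone_in_belief
    (C q s k : ℝ) (hC : 0 < C) (hs0 : 0 ≤ s) (hsq : s < q) (hq1 : q ≤ 1)
    (hk0 : 0 < k) (hk1 : k < 1)
    (hden : ∀ b ∈ Set.Icc (0:ℝ) 1, 0 < 1 - (q*b + s*(1-b))*k)
    (J : ℕ → ℝ → ℝ) (A : ℕ → ℝ → ℝ)
    (hJ0 : ∀ b : ℝ, J 0 b = (1 - k*b)*C)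
    (hA : ∀ m : ℕ, ∀ b : ℝ, A m b =
      (1 - k*b)*C + (q*b + s*(1-b))*k * J m 1 +
        (1 - (q*b + s*(1-b))*k) *
          J m (((q*b + s*(1-b))*(1-k)) / (1 - (q*b + s*(1-b))*k)))
    (hJrec : ∀ m : ℕ, ∀ b : ℝ, J (m+1) b = min C (A m b)) :
    ∀ m : ℕ, ∀ b ∈ Set.Icc (0:ℝ) 1, ∀ b' ∈ Set.Icc (0:ℝ) 1,
      b < b' → A m b' ≤ A m b := by
  have h1mem : (1:ℝ) ∈ Set.Icc (0:ℝ) 1 := by norm_num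
  have hp : ∀ b ∈ Set.Icc (0:ℝ) 1, 0 ≤ q*b + s*(1-b) ∧ q*b + s*(1-b) ≤ 1 := by
    rintro b ⟨hb0, hb1⟩
    constructor <;> nlinarith
  have hΦmem : ∀ b ∈ Set.Icc (0:ℝ) 1,
      ((q*b + s*(1-b))*(1-k)) / (1 - (q*b + s*(1-b))*k) ∈ Set.Icc (0:ℝ) 1 := by
    intro b hb
    obtain ⟨hp0, hp1⟩ := hp b hb
    constructor
    · exact div_nonneg (mul_nonneg hp0 (by linarith)) (hden b hb).le
    · rw [div_le_one (hden b hb)]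
      nlinarith
  have hΦmono : ∀ b ∈ Set.Icc (0:ℝ) 1, ∀ b' ∈ Set.Icc (0:ℝ) 1, b ≤ b' →
      ((q*b + s*(1-b))*(1-k)) / (1 - (q*b + s*(1-b))*k) ≤
        ((q*b' + s*(1-b'))*(1-k)) / (1 - (q*b' + s*(1-b'))*k) := by
    intro b hb b' hb' hbb'
    have hpp : q*b + s*(1-b) ≤ q*b' + s*(1-b') := by nlinarith
    rw [div_le_div_iff₀ (hden b hb) (hden b' hb')]
    nlinarith [mul_nonneg (sub_nonneg.mpr hpp) (by linarith : (0:ℝ) ≤ 1-k)]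
  have hAmono : ∀ m : ℕ,
      (∀ b ∈ Set.Icc (0:ℝ) 1, ∀ b' ∈ Set.Icc (0:ℝ) 1, b ≤ b' → J m b' ≤ J m b) →
      ∀ b ∈ Set.Icc (0:ℝ) 1, ∀ b' ∈ Set.Icc (0:ℝ) 1, b ≤ b' → A m b' ≤ A m b := by
    intro m hJm b hb b' hb' hbb'
    rw [hA, hA]
    have h1 : J m (((q*b' + s*(1-b'))*(1-k)) / (1 - (q*b' + s*(1-b'))*k)) ≤
        J m (((q*b + s*(1-b))*(1-k)) / (1 - (q*b + s*(1-b))*k)) :=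
      hJm _ (hΦmem b hb) _ (hΦmem b' hb') (hΦmono b hb b' hb' hbb')
    have h2 : J m 1 ≤ J m (((q*b' + s*(1-b'))*(1-k)) / (1 - (q*b' + s*(1-b'))*k)) :=
      hJm _ (hΦmem b' hb') 1 h1mem (hΦmem b' hb').2
    have hpp : q*b + s*(1-b) ≤ q*b' + s*(1-b') := by nlinarith
    nlinarith [mul_nonneg (mul_nonneg hk0.le (sub_nonneg.mpr hpp)) (sub_nonneg.mpr h2),
      mul_nonneg (hden b hb).le (sub_nonneg.mpr h1),
      mul_nonneg (mul_nonneg hk0.le hC.le) (sub_nonneg.mpr hbb')]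
  have hJmono : ∀ m : ℕ, ∀ b ∈ Set.Icc (0:ℝ) 1, ∀ b' ∈ Set.Icc (0:ℝ) 1,
      b ≤ b' → J m b' ≤ J m b := by
    intro m
    induction m with
    | zero =>
      intro b hb b' hb' hbb'
      rw [hJ0, hJ0]
      nlinarith [mul_nonneg (mul_nonneg hk0.le hC.le) (sub_nonneg.mpr hbb')]
    | succ n ih =>
      intro b hb b' hb' hbb'
      rw [hJrec, hJrec]
      exact min_le_min le_rfl (hAmono n ih b hb b' hb' hbb')
  intro m b hb b' hb' hbb'
  exact hAmono m (hJmono m) b hb b' hb' hbb'.le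
end

section
/- Let π₁ = Φ(1) and π_{m+1} = Φ(π_m), where Φ is the failed-ACK belief update with 0 ≤ s < q < 1 and k ∈ (0,1). Then (π_m) is strictly decreasing and converges to the unique fixed point b* ∈ [0,1) of Φ, which satisfies b* < π_m for all m. Consequently, for any threshold ᾱ with b* < ᾱ < π₁, there exists a smallest integer r ≥ 1 such that π_r ≤ ᾱ. -/
open Filter

/-- Let `Φ` be the failed-ACK belief update with `0 ≤ s < q < 1`,
`k ∈ (0,1)`, and let `π (m)` (indexed here from `0`, so `π 0 = Φ 1` is the paper's
`π₁` and `π m` is the paper's `π_{m+1}`) be the belief after successive ACK failures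
starting from belief `1`. Then `(π m)` is strictly decreasing and converges to the
unique fixed point `b* ∈ [0,1)` of `Φ`, which satisfies `b* < π m` for all `m`;
consequently, for any threshold `ᾱ` with `b* < ᾱ < π 0` there is a smallest integer
`r ≥ 1` such that `π (r-1) ≤ ᾱ` (i.e. the paper's `π_r ≤ ᾱ`). -/
theorem successive_ack_failures_reach_threshold
    (q s k : ℝ) (hs0 : 0 ≤ s) (hsq : s < q) (hq1 : q < 1) (hk0 : 0 < k) (hk1 : k < 1)
    (Φ : ℝ → ℝ)
    (hΦ : ∀ b : ℝ, Φ b =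
      ((q*b + s*(1-b))*(1-k)) /
        ((q*b + s*(1-b))*(1-k) + (1-q)*b + (1-s)*(1-b)))
    (π : ℕ → ℝ) (hπ0 : π 0 = Φ 1) (hπrec : ∀ m, π (m+1) = Φ (π m)) :
    StrictAnti π ∧
    ∃ bstar ∈ Set.Ico (0:ℝ) 1,
      Φ bstar = bstar ∧
      (∀ b ∈ Set.Ico (0:ℝ) 1, Φ b = b → b = bstar) ∧
      Tendsto π atTop (nhds bstar) ∧
      (∀ m, bstar < π m) ∧
      (∀ αbar : ℝ, bstar < αbar → αbar < π 0 →
        ∃ r : ℕ, 1 ≤ r ∧ π (r-1) ≤ αbar ∧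
          ∀ r' : ℕ, 1 ≤ r' → π (r'-1) ≤ αbar → r ≤ r') := by
  have hq0 : 0 < q := lt_of_le_of_lt hs0 hsq
  -- basic facts on p(b) := q*b + s*(1-b)
  have hp_le : ∀ b : ℝ, b ≤ 1 → q*b + s*(1-b) ≤ q := by
    intro b hb; nlinarith
  have hp_nonneg : ∀ b : ℝ, 0 ≤ b → b ≤ 1 → 0 ≤ q*b + s*(1-b) := by
    intro b hb0 hb1; nlinarith
  have hDpos : ∀ b : ℝ, 0 ≤ b → b ≤ 1 →
      0 < (q*b + s*(1-b))*(1-k) + (1-q)*b + (1-s)*(1-b) := by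
    intro b hb0 hb1
    have h1 : (q*b + s*(1-b))*(1-k) + (1-q)*b + (1-s)*(1-b)
        = 1 - k*(q*b + s*(1-b)) := by ring
    rw [h1]
    have h2 : k*(q*b + s*(1-b)) ≤ k*q :=
      mul_le_mul_of_nonneg_left (hp_le b hb1) hk0.le
    nlinarith
  have hrange : ∀ b : ℝ, 0 ≤ b → b ≤ 1 → 0 ≤ Φ b ∧ Φ b < 1 := by
    intro b hb0 hb1
    rw [hΦ b]
    have hd := hDpos b hb0 hb1
    constructor
    · apply div_nonneg _ hd.le
      have := hp_nonneg b hb0 hb1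
      nlinarith
    · rw [div_lt_one hd]
      have := hp_le b hb1
      nlinarith
  have hmono : ∀ a b : ℝ, 0 ≤ a → a < b → b ≤ 1 → Φ a < Φ b := by
    intro a b ha0 hab hb1
    have ha1 : a ≤ 1 := le_trans hab.le hb1
    have hb0 : (0:ℝ) ≤ b := le_trans ha0 hab.le
    rw [hΦ a, hΦ b, div_lt_div_iff₀ (hDpos a ha0 ha1) (hDpos b hb0 hb1)]
    nlinarith [mul_pos (mul_pos (sub_pos.2 hk1) (sub_pos.2 hsq)) (sub_pos.2 hab)]
  have hbnd : ∀ m, 0 ≤ π m ∧ π m < 1 := by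
    intro m
    induction m with
    | zero => rw [hπ0]; exact hrange 1 (by norm_num) (by norm_num)
    | succ n ih => rw [hπrec n]; exact hrange _ ih.1 ih.2.le
  have hdec : ∀ m, π (m+1) < π m := by
    intro m
    induction m with
    | zero =>
      calc π 1 = Φ (π 0) := hπrec 0
        _ < Φ 1 := hmono (π 0) 1 (hbnd 0).1 (hbnd 0).2 le_rfl
        _ = π 0 := hπ0.symm
    | succ n ih =>
      calc π (n+2) = Φ (π (n+1)) := hπrec (n+1)
        _ < Φ (π n) := hmono _ _ (hbnd (n+1)).1 ih (hbnd n).2.le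
        _ = π (n+1) := (hπrec n).symm
  have hSA : StrictAnti π := strictAnti_nat_of_succ_lt hdec
  refine ⟨hSA, ?_⟩
  have hBdd : BddBelow (Set.range π) := ⟨0, by rintro x ⟨m, rfl⟩; exact (hbnd m).1⟩
  set bstar : ℝ := ⨅ m, π m with hbs
  have htend : Tendsto π atTop (nhds bstar) := tendsto_atTop_ciInf hSA.antitone hBdd
  have hlb : ∀ m, bstar ≤ π m := fun m => ciInf_le hBdd m
  have hlt : ∀ m, bstar < π m := fun m => lt_of_le_of_lt (hlb (m+1)) (hdec m)
  have hbs0 : 0 ≤ bstar := le_ciInf fun m => (hbnd m).1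
  have hbs1 : bstar < 1 := lt_of_le_of_lt (hlb 0) (hbnd 0).2
  -- fixed point
  have hcont : ContinuousAt Φ bstar := by
    have hΦeq : Φ = fun b => ((q*b + s*(1-b))*(1-k)) /
        ((q*b + s*(1-b))*(1-k) + (1-q)*b + (1-s)*(1-b)) := funext hΦ
    rw [hΦeq]
    exact ContinuousAt.div (by fun_prop) (by fun_prop) (ne_of_gt (hDpos bstar hbs0 hbs1.le))
  have hfix : Φ bstar = bstar := by
    have h1 : Tendsto (fun m => π (m+1)) atTop (nhds bstar) :=
      htend.comp (tendsto_add_atTop_nat 1)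
    have h2 : Tendsto (fun m => Φ (π m)) atTop (nhds (Φ bstar)) := hcont.tendsto.comp htend
    have h3 : (fun m => π (m+1)) = fun m => Φ (π m) := funext hπrec
    rw [h3] at h1
    exact tendsto_nhds_unique h2 h1
  -- uniqueness
  have huniq : ∀ b ∈ Set.Ico (0:ℝ) 1, Φ b = b → b = bstar := by
    rintro b ⟨hb0, hb1⟩ hfb
    by_contra hne
    have hpoly : ∀ x : ℝ, 0 ≤ x → x < 1 → Φ x = x →
        k*(q-s)*x^2 + ((1-k)*(q-s) + k*s - 1)*x + (1-k)*s = 0 := by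
      intro x hx0 hx1 hfx
      have hd := hDpos x hx0 hx1.le
      rw [hΦ x, div_eq_iff (ne_of_gt hd)] at hfx
      linear_combination hfx
    have h1 := hpoly b hb0 hb1 hfb
    have h2 := hpoly bstar hbs0 hbs1 hfix
    have hsub : (b - bstar) * (k*(q-s)*(b+bstar) + ((1-k)*(q-s) + k*s - 1)) = 0 := by
      linear_combination h1 - h2
    have hB : k*(q-s)*(b+bstar) + ((1-k)*(q-s) + k*s - 1) = 0 := by
      rcases mul_eq_zero.1 hsub with h | h
      · exact absurd (sub_eq_zero.1 h) hne
      · exact h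
    have hC : (1-k)*s = k*(q-s)*(b*bstar) := by
      linear_combination h1 - b * hB
    have hF1 : q - 1 = k*(q-s)*((1-b)*(1-bstar)) := by
      linear_combination hC + hB
    nlinarith [mul_pos (mul_pos hk0 (sub_pos.2 hsq))
      (mul_pos (sub_pos.2 hb1) (sub_pos.2 hbs1))]
  refine ⟨bstar, ⟨hbs0, hbs1⟩, hfix, huniq, htend, hlt, ?_⟩
  intro αbar hα1 hα2
  have hev : ∃ n, π n ≤ αbar := by
    obtain ⟨n, hn⟩ := (htend.eventually (eventually_lt_nhds hα1)).exists
    exact ⟨n, hn.le⟩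
  classical
  refine ⟨Nat.find hev + 1, by omega, ?_, ?_⟩
  · simpa using Nat.find_spec hev
  · intro r' hr' hπr'
    have : Nat.find hev ≤ r' - 1 := Nat.find_min' hev hπr'
    omega
end
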